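/- arXiv:1807.04431 — 2 statements merged into one kernel-verified Lean document; each statement's English description precedes it below -/
import Mathlib

section
/- Let E be a finite-dimensional real inner product space and let f : E → ℝ be twice continuously differentiable, with second derivative H(x) := f''(x) regarded as a continuous symmetric bilinear form. Let λ₀, c₃ > 0 and θ₀ ∈ E. Suppose H(θ₀)(v, v) ≤ -λ₀‖v‖² for every v ∈ E, and that ‖H(x) - H(y)‖ ≤ c₃‖x - y‖ in operator norm for all x, y in the closed ball of radius λ₀/c₃ around θ₀. Then f is concave on the closed ball of radius λ₀/c₃ around θ₀ (i.e. ConcaveOn ℝ on that ball). -/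
/-- Under a uniform negative bound on the Hessian quadratic form at `θ₀`
and a `c₃`-Lipschitz bound on the Hessian in operator norm over the closed ball of
radius `λ₀/c₃` around `θ₀`, the C² function `f` is concave on that closed ball. -/
theorem concaveOn_closedBall_of_hessian_bound
    {E : Type*} [NormedAddCommGroup E] [InnerProductSpace ℝ E] [FiniteDimensional ℝ E]
    (f : E → ℝ) (hf : ContDiff ℝ 2 f)
    (H : E → E →L[ℝ] E →L[ℝ] ℝ) (hH : H = fderiv ℝ (fderiv ℝ f))
    (lam0 c3 : ℝ) (hlam0 : 0 < lam0) (hc3 : 0 < c3) (θ₀ : E)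
    (hneg : ∀ v : E, H θ₀ v v ≤ -lam0 * ‖v‖ ^ 2)
    (hLip : ∀ x ∈ Metric.closedBall θ₀ (lam0 / c3),
      ∀ y ∈ Metric.closedBall θ₀ (lam0 / c3), ‖H x - H y‖ ≤ c3 * ‖x - y‖) :
    ConcaveOn ℝ (Metric.closedBall θ₀ (lam0 / c3)) f := by
  set B := Metric.closedBall θ₀ (lam0 / c3) with hB
  have hBconv : Convex ℝ B := convex_closedBall _ _
  have hθ₀B : θ₀ ∈ B := Metric.mem_closedBall_self (by positivity)
  -- differentiability facts
  have hdf : Differentiable ℝ f := hf.differentiable (by norm_num)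
  have hdF : Differentiable ℝ (fderiv ℝ f) :=
    (hf.fderiv_right (m := 1) (by norm_num)).differentiable (by norm_num)
  -- key: quadratic form nonpositive on B
  have hquad : ∀ z ∈ B, ∀ v : E, H z v v ≤ 0 := by
    intro z hz v
    have h1 : H z v v = H θ₀ v v + (H z - H θ₀) v v := by
      simp
    have h2 : (H z - H θ₀) v v ≤ lam0 * ‖v‖ ^ 2 := by
      calc (H z - H θ₀) v v ≤ ‖(H z - H θ₀) v v‖ := le_abs_self _
        _ ≤ ‖(H z - H θ₀) v‖ * ‖v‖ := ((H z - H θ₀) v).le_opNorm v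
        _ ≤ ‖H z - H θ₀‖ * ‖v‖ * ‖v‖ := by
            gcongr
            exact (H z - H θ₀).le_opNorm v
        _ ≤ c3 * ‖z - θ₀‖ * ‖v‖ * ‖v‖ := by
            gcongr
            exact hLip z hz θ₀ hθ₀B
        _ ≤ c3 * (lam0 / c3) * ‖v‖ * ‖v‖ := by
            gcongr
            exact mem_closedBall_iff_norm.mp hz
        _ = lam0 * ‖v‖ ^ 2 := by
            field_simp
    have := hneg v
    nlinarith [this, h2]
  -- prove concavity via 1D restriction
  refine ⟨hBconv, ?_⟩
  intro x hx y hy a b ha hb hab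
  rcases eq_or_lt_of_le ha with ha0 | ha0
  · simp [← ha0, (by linarith : b = 1)]
  rcases eq_or_lt_of_le hb with hb0 | hb0
  · simp [← hb0, (by linarith : a = 1)]
  set v := y - x with hv
  set γ : ℝ → E := fun t => x + t • v with hγ
  have hγB : ∀ t ∈ Set.Icc (0:ℝ) 1, γ t ∈ B := by
    intro t ht
    have : γ t = (1 - t) • x + t • y := by
      simp only [hγ, hv]
      module
    rw [this]
    exact hBconv hx hy (by linarith [ht.1, ht.2]) ht.1 (by ring)
  set g : ℝ → ℝ := fun t => f (γ t) with hg
  have hγd : ∀ t : ℝ, HasDerivAt γ v t := by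
    intro t
    exact (((hasDerivAt_id t).smul_const v).const_add x).congr_deriv (one_smul ℝ v)
  have hgd : ∀ t : ℝ, HasDerivAt g (fderiv ℝ f (γ t) v) t := by
    intro t
    exact ((hdf (γ t)).hasFDerivAt).comp_hasDerivAt t (hγd t)
  have hg'd : ∀ t : ℝ, HasDerivAt (fun t => fderiv ℝ f (γ t) v) (H (γ t) v v) t := by
    intro t
    have h1 : HasDerivAt (fun t => fderiv ℝ f (γ t)) (H (γ t) v) t := by
      rw [hH]
      exact ((hdF (γ t)).hasFDerivAt).comp_hasDerivAt t (hγd t)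
    have h2 := (ContinuousLinearMap.apply ℝ ℝ v).hasFDerivAt.comp_hasDerivAt t h1
    exact h2
  have hgconc : ConcaveOn ℝ (Set.Icc (0:ℝ) 1) g := by
    apply concaveOn_of_hasDerivWithinAt2_nonpos (f' := fun t => fderiv ℝ f (γ t) v)
      (f'' := fun t => H (γ t) v v) (convex_Icc 0 1)
    · exact fun t _ => ((hgd t).continuousAt).continuousWithinAt
    · exact fun t _ => (hgd t).hasDerivWithinAt
    · exact fun t _ => (hg'd t).hasDerivWithinAt
    · intro t ht
      rw [interior_Icc] at ht
      exact hquad (γ t) (hγB t ⟨le_of_lt ht.1, le_of_lt ht.2⟩) v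
  have key := hgconc.2 (Set.left_mem_Icc.mpr zero_le_one) (Set.right_mem_Icc.mpr zero_le_one)
    ha hb hab
  have hγeval : γ (a • (0:ℝ) + b • (1:ℝ)) = a • x + b • y := by
    simp only [hγ, hv, smul_zero, smul_eq_mul, mul_one, zero_add]
    have : a = 1 - b := by linarith
    rw [this]; module
  have hg0 : g 0 = f x := by simp [hg, hγ]
  have hg1 : g 1 = f y := by simp [hg, hγ, hv]
  calc a • f x + b • f y = a • g 0 + b • g 1 := by rw [hg0, hg1]
    _ ≤ g (a • (0:ℝ) + b • (1:ℝ)) := key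
    _ = f (a • x + b • y) := congrArg f hγeval
end

section
/- Let E be a finite-dimensional real inner product space and let f : E → ℝ be twice continuously differentiable, with second derivative H(x) := f''(x) regarded as a continuous symmetric bilinear form. Let λ₀, c₃ > 0 and θ₀ ∈ E. Suppose H(θ₀)(v, v) ≤ -λ₀‖v‖² for every v ∈ E, that ‖H(x) - H(y)‖ ≤ c₃‖x - y‖ in operator norm for all x, y in the closed ball of radius λ₀/c₃ around θ₀, and that the gradient of f vanishes at θ₀ (f'(θ₀) = 0). Then θ₀ is the unique maximizer of f on the closed ball: f(x) < f(θ₀) for every x with 0 < ‖x - θ₀‖ ≤ λ₀/c₃. -/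
set_option maxHeartbeats 1000000

/-- Under the Hessian eigenvalue bound at `θ₀`, the `c₃`-Lipschitz bound
on the Hessian over the closed ball of radius `λ₀/c₃`, and vanishing gradient at `θ₀`,
the point `θ₀` is the unique maximizer of `f` on the closed ball:
`f x < f θ₀` whenever `0 < ‖x - θ₀‖ ≤ λ₀/c₃`. -/
theorem isStrictMax_on_closedBall_of_hessian_bound
    {E : Type*} [NormedAddCommGroup E] [InnerProductSpace ℝ E] [FiniteDimensional ℝ E]
    (f : E → ℝ) (hf : ContDiff ℝ 2 f)
    (H : E → E →L[ℝ] E →L[ℝ] ℝ) (hH : H = fderiv ℝ (fderiv ℝ f))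
    (lam0 c3 : ℝ) (hlam0 : 0 < lam0) (hc3 : 0 < c3) (θ₀ : E)
    (hneg : ∀ v : E, H θ₀ v v ≤ -lam0 * ‖v‖ ^ 2)
    (hLip : ∀ x ∈ Metric.closedBall θ₀ (lam0 / c3),
      ∀ y ∈ Metric.closedBall θ₀ (lam0 / c3), ‖H x - H y‖ ≤ c3 * ‖x - y‖)
    (hgrad : fderiv ℝ f θ₀ = 0) :
    ∀ x : E, 0 < ‖x - θ₀‖ → ‖x - θ₀‖ ≤ lam0 / c3 → f x < f θ₀ := by
  intro x hx0 hxr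
  set v := x - θ₀ with hv
  have hf1 : Differentiable ℝ f := hf.differentiable (by norm_num)
  have hf2' : ContDiff ℝ 1 (fderiv ℝ f) := hf.fderiv_right (by norm_num)
  have hf2 : Differentiable ℝ (fderiv ℝ f) := hf2'.differentiable one_ne_zero
  set φ : ℝ → E := fun t => θ₀ + t • v with hφ
  have hφd : ∀ t : ℝ, HasDerivAt φ v t := by
    intro t
    have := ((hasDerivAt_id t).smul_const v).const_add θ₀
    simpa [hφ] using this
  have hg' : ∀ t : ℝ, HasDerivAt (fun s => f (φ s)) (fderiv ℝ f (φ t) v) t := fun t =>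
    (hf1 (φ t)).hasFDerivAt.comp_hasDerivAt t (hφd t)
  have hg'' : ∀ t : ℝ, HasDerivAt (fun s => fderiv ℝ f (φ s) v) (H (φ t) v v) t := by
    intro t
    have h1 : HasFDerivAt (fderiv ℝ f) (H (φ t)) (φ t) := by
      rw [hH]; exact (hf2 (φ t)).hasFDerivAt
    have h2 : HasDerivAt (fun s => fderiv ℝ f (φ s)) (H (φ t) v) t :=
      h1.comp_hasDerivAt t (hφd t)
    simpa using h2.clm_apply (hasDerivAt_const t v)
  have hclam : c3 * ‖v‖ ≤ lam0 := by
    have := (le_div_iff₀ hc3).mp hxr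
    linarith
  have hmem : ∀ t ∈ Set.Icc (0:ℝ) 1, φ t ∈ Metric.closedBall θ₀ (lam0 / c3) := by
    intro t ht
    simp only [Metric.mem_closedBall, hφ, dist_eq_norm]
    have : ‖θ₀ + t • v - θ₀‖ = |t| * ‖v‖ := by
      rw [add_sub_cancel_left, norm_smul, Real.norm_eq_abs]
    rw [this, abs_of_nonneg ht.1]
    calc t * ‖v‖ ≤ 1 * ‖v‖ := mul_le_mul_of_nonneg_right ht.2 (norm_nonneg v)
    _ ≤ lam0 / c3 := by rw [one_mul]; exact hxr
  have hθ₀mem : θ₀ ∈ Metric.closedBall θ₀ (lam0 / c3) := by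
    simp [le_of_lt (div_pos hlam0 hc3)]
  have key : ∀ t ∈ Set.Ioo (0:ℝ) 1, H (φ t) v v < 0 := by
    intro t ht
    have hm : φ t ∈ Metric.closedBall θ₀ (lam0 / c3) := hmem t ⟨ht.1.le, ht.2.le⟩
    set D := H (φ t) - H θ₀ with hD
    have hDnorm : ‖D‖ ≤ c3 * (t * ‖v‖) := by
      have := hLip (φ t) hm θ₀ hθ₀mem
      have heq : ‖φ t - θ₀‖ = t * ‖v‖ := by
        simp only [hφ]
        rw [add_sub_cancel_left, norm_smul, Real.norm_eq_abs, abs_of_nonneg ht.1.le]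
      rwa [heq] at this
    have ha : ‖D v v‖ ≤ ‖D v‖ * ‖v‖ := (D v).le_opNorm v
    have hb : ‖D v‖ ≤ ‖D‖ * ‖v‖ := D.le_opNorm v
    have hsplit : H (φ t) v v = H θ₀ v v + D v v := by simp [hD]
    have h1 := hneg v
    have hvpos : (0:ℝ) < ‖v‖ := hx0
    have ha' : D v v ≤ ‖D v‖ * ‖v‖ := by
      rw [Real.norm_eq_abs] at ha
      exact (le_abs_self _).trans ha
    have h2 : D v v ≤ ‖D‖ * ‖v‖ * ‖v‖ :=
      ha'.trans (mul_le_mul_of_nonneg_right hb (norm_nonneg v))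
    have h3 : D v v ≤ c3 * (t * ‖v‖) * ‖v‖ * ‖v‖ :=
      h2.trans (mul_le_mul_of_nonneg_right
        (mul_le_mul_of_nonneg_right hDnorm (norm_nonneg v)) (norm_nonneg v))
    have ht1 : c3 * (t * ‖v‖) < lam0 := by nlinarith [ht.1, ht.2]
    rw [hsplit]
    have hvv : (0:ℝ) < ‖v‖ * ‖v‖ := mul_pos hvpos hvpos
    generalize (H θ₀) v v = A at h1 ⊢
    generalize D v v = B at h3 ⊢
    generalize hn : ‖v‖ = n at h1 h3 ht1 hvv ⊢
    nlinarith
  have hcont'' : Continuous (fun s => fderiv ℝ f (φ s) v) :=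
    Differentiable.continuous (fun t => (hg'' t).differentiableAt)
  have hanti' : StrictAntiOn (fun t => fderiv ℝ f (φ t) v) (Set.Icc 0 1) := by
    apply strictAntiOn_of_deriv_neg (convex_Icc 0 1) hcont''.continuousOn
    intro t ht
    rw [interior_Icc] at ht
    rw [(hg'' t).deriv]
    exact key t ht
  have hg'0 : fderiv ℝ f (φ 0) v = 0 := by
    simp [hφ, hgrad]
  have hg'neg : ∀ t ∈ Set.Ioo (0:ℝ) 1, fderiv ℝ f (φ t) v < 0 := by
    intro t ht
    have := hanti' ⟨le_rfl, zero_le_one⟩ ⟨ht.1.le, ht.2.le⟩ ht.1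
    simpa [hg'0] using this
  have hcont' : Continuous (fun s => f (φ s)) :=
    Differentiable.continuous (fun t => (hg' t).differentiableAt)
  have hanti : StrictAntiOn (fun t => f (φ t)) (Set.Icc 0 1) := by
    apply strictAntiOn_of_deriv_neg (convex_Icc 0 1) hcont'.continuousOn
    intro t ht
    rw [interior_Icc] at ht
    rw [(hg' t).deriv]
    exact hg'neg t ht
  have hfinal := hanti ⟨le_rfl, zero_le_one⟩ ⟨zero_le_one, le_rfl⟩ zero_lt_one
  simpa [hφ, hv] using hfinal
end
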